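/- Suppose α is an algebraic integer of F = ℚ(√n₁) that is not a square in F but becomes a square in the biquadratic field K = ℚ(√n₁, √n₂). Then every odd rational integer divisor of gcd(n₂, n₃) divides α in O_K. -/

import Mathlib

open Real Polynomial

/-- A rational whose square is an integer is an integer. -/
lemma aux_rat_int_of_sq_int (q : ℚ) (N : ℤ) (h : q * q = (N : ℚ)) : ∃ m : ℤ, (m : ℚ) = q := by
  have hden : q.den * q.den = 1 := by
    have := Rat.mul_self_den q
    rw [h, Rat.den_intCast] at this
    omega
  have : q.den = 1 := by nlinarith [q.den.pos_of_ne_zero (q.den_nz)]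
  exact ⟨q.num, (Rat.den_eq_one_iff q).mp this⟩

lemma aux_int_of_sq_mul_squarefree (q : ℚ) (n : ℕ) (hn : n ≠ 0) (hsf : Squarefree n)
    (N : ℤ) (h : q * q * (n : ℚ) = (N : ℚ)) : ∃ m : ℤ, (m : ℚ) = q := by
  have hq : q * q = (N : ℚ) / (n : ℚ) := by
    field_simp at h ⊢
    linarith
  have hdvd := Rat.den_dvd N (n : ℤ)
  rw [Rat.divInt_eq_div] at hdvd
  have hqq : ((q * q).den : ℤ) ∣ (n : ℤ) := by
    rw [hq]; exact_mod_cast hdvd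
  rw [Rat.mul_self_den] at hqq
  have h2 : (q.den * q.den : ℕ) ∣ n := by exact_mod_cast hqq
  have hden1 : q.den = 1 := Nat.isUnit_iff.mp (hsf q.den h2)
  exact ⟨q.num, (Rat.den_eq_one_iff q).mp hden1⟩

lemma aux_not_irrational_of_rat_sq (q : ℚ) (n : ℕ) (h : q ^ 2 = (n : ℚ)) :
    ¬ Irrational (Real.sqrt n) := by
  intro hi
  refine hi ⟨|q|, ?_⟩
  have h2 : ((n : ℝ)) = ((q : ℝ)) ^ 2 := by exact_mod_cast h.symm
  rw [h2, Real.sqrt_sq_eq_abs, Rat.cast_abs]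

/-- squarefree and ≠ 1 implies not a square -/
lemma aux_not_square (n : ℕ) (hn : n ≠ 1) (hsf : Squarefree n) : ¬ IsSquare n := by
  rintro ⟨r, rfl⟩
  exact hn (by simpa using Nat.isUnit_iff.mp (hsf r (dvd_refl _)))

lemma aux_monic_quad {R : Type*} [CommRing R] (c₁ c₀ : R) :
    (X ^ 2 + C c₁ * X + C c₀).Monic := by
  rw [add_assoc]
  apply Polynomial.monic_X_pow_add
  apply lt_of_le_of_lt (Polynomial.degree_add_le _ _)
  rw [max_lt_iff]
  exact ⟨lt_of_le_of_lt (Polynomial.degree_C_mul_X_le _) (by norm_num),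
    lt_of_le_of_lt Polynomial.degree_C_le (by norm_num)⟩

/-- A real root of a monic integer quadratic is integral over ℤ. -/
lemma aux_isIntegral_quadratic (x : ℝ) (c₁ c₀ : ℤ)
    (h : x ^ 2 + (c₁ : ℝ) * x + (c₀ : ℝ) = 0) : IsIntegral ℤ x := by
  refine ⟨X ^ 2 + C c₁ * X + C c₀, aux_monic_quad c₁ c₀, ?_⟩
  show eval₂ (algebraMap ℤ ℝ) x _ = 0
  simp only [eval₂_add, eval₂_mul, eval₂_pow, eval₂_X, eval₂_C]
  simp only [eq_intCast]
  linear_combination h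

/-- Integrality constraints for an element of a real quadratic field. -/
lemma aux_quad_integral (n : ℕ) (a b : ℚ) (hirr : Irrational (Real.sqrt n))
    (hint : IsIntegral ℤ ((a : ℝ) + (b : ℝ) * Real.sqrt n)) :
    ∃ A N : ℤ, (A : ℚ) = 2 * a ∧ (N : ℚ) = a ^ 2 - b ^ 2 * n := by
  rcases eq_or_ne b 0 with hb | hb
  · subst hb
    simp only [Rat.cast_zero, zero_mul, add_zero] at hint
    have h1 : IsIntegral ℤ (a : ℚ) := by
      rw [← isIntegral_algebraMap_iff (A := ℚ) (B := ℝ) (Rat.cast_injective)]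
      · rwa [show (algebraMap ℚ ℝ) a = (a : ℝ) from eq_ratCast _ a]
    obtain ⟨y, hy⟩ := IsIntegrallyClosed.isIntegral_iff.mp h1
    rw [eq_intCast] at hy
    exact ⟨2 * y, y ^ 2, by push_cast [hy]; ring, by push_cast [hy]; ring⟩
  · set x : ℝ := (a : ℝ) + (b : ℝ) * Real.sqrt n with hx
    have hxirr : Irrational x := ((hirr.ratCast_mul hb).ratCast_add (q := a))
    have hs : Real.sqrt n * Real.sqrt n = (n : ℝ) :=
      Real.mul_self_sqrt (by positivity)
    set q : ℚ[X] := X ^ 2 + C (-(2 * a)) * X + C (a ^ 2 - b ^ 2 * n) with hqdef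
    have hq0 : (aeval x) q = 0 := by
      simp only [hqdef, map_add, map_mul, map_pow, aeval_X, aeval_C]
      simp only [eq_ratCast]
      rw [hx]
      push_cast
      linear_combination ((b : ℝ)) ^ 2 * hs
    have hmq : q.Monic := aux_monic_quad _ _
    have hqdeg : q.natDegree = 2 := by
      have h1 : q.degree = 2 := by rw [hqdef]; compute_degree!
      exact natDegree_eq_of_degree_eq_some h1
    have hint' : IsIntegral ℚ x := IsIntegral.tower_top hint
    have hdvd : minpoly ℚ x ∣ q := minpoly.dvd ℚ x hq0
    have h2le : 2 ≤ (minpoly ℚ x).natDegree := by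
      rw [minpoly.two_le_natDegree_iff hint']
      rintro ⟨r, hr⟩
      exact hxirr ⟨r, by rw [← hr, eq_ratCast]⟩
    have heq : q = minpoly ℚ x := by
      obtain ⟨r, hr⟩ := hdvd
      have hm0 : minpoly ℚ x ≠ 0 := minpoly.ne_zero hint'
      have hr0 : r ≠ 0 := by
        rintro rfl; rw [mul_zero] at hr; exact hmq.ne_zero hr
      have hdegs : 2 = (minpoly ℚ x).natDegree + r.natDegree := by
        rw [← hqdeg, hr, Polynomial.natDegree_mul hm0 hr0]
      have hrdeg : r.natDegree = 0 := by omega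
      have hrC : r = C (r.coeff 0) := Polynomial.eq_C_of_natDegree_eq_zero hrdeg
      have hlc : r.coeff 0 = 1 := by
        have := congrArg Polynomial.leadingCoeff hr
        rw [hmq.leadingCoeff, Polynomial.leadingCoeff_mul,
          (minpoly.monic hint').leadingCoeff, one_mul, hrC] at this
        simpa using this.symm
      rw [hr, hrC, hlc, map_one, mul_one]
    have hmap : minpoly ℚ x = (minpoly ℤ x).map (algebraMap ℤ ℚ) :=
      minpoly.isIntegrallyClosed_eq_field_fractions' ℚ hint
    refine ⟨-((minpoly ℤ x).coeff 1), (minpoly ℤ x).coeff 0, ?_, ?_⟩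
    · have h1 : q.coeff 1 = -(2 * a) := by
        simp only [hqdef, Polynomial.coeff_add, Polynomial.coeff_C_mul,
          Polynomial.coeff_X_pow, Polynomial.coeff_X, Polynomial.coeff_C]
        norm_num
      rw [heq, hmap, Polynomial.coeff_map, eq_intCast] at h1
      push_cast
      linarith [h1]
    · have h1 : q.coeff 0 = a ^ 2 - b ^ 2 * n := by
        simp only [hqdef, Polynomial.coeff_add, Polynomial.coeff_C_mul,
          Polynomial.coeff_X_pow, Polynomial.coeff_X, Polynomial.coeff_C]
        norm_num
      rw [heq, hmap, Polynomial.coeff_map, eq_intCast] at h1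
      exact h1

/-- `√n₂ ∉ ℚ(√n₁)` for distinct squarefree `n₁ n₂ > 1`. -/
lemma aux_not_mem_F (n₁ n₂ : ℕ) (h1 : 0 < n₁) (hne : n₁ ≠ n₂)
    (hsf1 : Squarefree n₁) (hsf2 : Squarefree n₂)
    (hirr1 : Irrational (Real.sqrt n₁)) (hirr2 : Irrational (Real.sqrt n₂)) :
    ∀ p q : ℚ, Real.sqrt n₂ ≠ (p : ℝ) + (q : ℝ) * Real.sqrt n₁ := by
  intro p q h
  have hs1 : Real.sqrt n₁ * Real.sqrt n₁ = (n₁ : ℝ) := Real.mul_self_sqrt (by positivity)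
  have hs2 : Real.sqrt n₂ * Real.sqrt n₂ = (n₂ : ℝ) := Real.mul_self_sqrt (by positivity)
  -- squaring
  have hsq : (n₂ : ℝ) = (p : ℝ) ^ 2 + (q : ℝ) ^ 2 * n₁ + 2 * p * q * Real.sqrt n₁ := by
    linear_combination -hs2 + (Real.sqrt n₂ + (p : ℝ) + (q : ℝ) * Real.sqrt n₁) * h
      + (q : ℝ) ^ 2 * hs1
  rcases eq_or_ne (p * q) 0 with hpq | hpq
  · rcases mul_eq_zero.mp hpq with hp | hq2
    · -- p = 0 : √n₂ = q √n₁, n₂ = q² n₁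
      subst hp
      have hq0 : q ≠ 0 := by
        rintro rfl
        simp only [Rat.cast_zero, zero_mul, add_zero] at h
        exact hirr2 ⟨0, by simpa using h.symm⟩
      push_cast at hsq
      have hratR : ((q : ℝ)) ^ 2 * (n₁ : ℝ) = (n₂ : ℝ) := by linarith
      have hrat : (q : ℚ) ^ 2 * (n₁ : ℚ) = (n₂ : ℚ) := by exact_mod_cast hratR
      -- q is an integer
      obtain ⟨m, hm⟩ := aux_int_of_sq_mul_squarefree q n₁ (by omega) hsf1 n₂
        (by push_cast; linear_combination hrat)
      have hm2 : m ^ 2 * (n₁ : ℤ) = (n₂ : ℤ) := by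
        have : ((m : ℚ)) ^ 2 * (n₁ : ℚ) = (n₂ : ℚ) := by rw [hm]; exact hrat
        exact_mod_cast this
      have hmnat : m.natAbs ^ 2 * n₁ = n₂ := by
        have := congrArg Int.natAbs hm2
        rwa [Int.natAbs_mul, Int.natAbs_pow, Int.natAbs_natCast, Int.natAbs_natCast] at this
      have : m.natAbs = 1 := by
        have hdvd : m.natAbs * m.natAbs ∣ n₂ := ⟨n₁, by rw [← hmnat]; ring⟩
        exact Nat.isUnit_iff.mp (hsf2 _ hdvd)
      rw [this] at hmnat
      exact hne (by omega)
    · -- q = 0 : √n₂ rational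
      rw [hq2] at h
      exact hirr2 ⟨p, by simpa using h.symm⟩
  · -- p q ≠ 0 : √n₁ rational
    have : Real.sqrt n₁ = (((n₂ - p ^ 2 - q ^ 2 * n₁) / (2 * p * q) : ℚ) : ℝ) := by
      have hpq' : (2 * (p : ℝ) * q) ≠ 0 := by
        have : ((p : ℝ) * q) ≠ 0 := by exact_mod_cast hpq
        intro h0; apply this; linarith
      push_cast
      rw [eq_div_iff hpq']
      linear_combination -hsq
    exact hirr1 ⟨_, this.symm⟩

/-- Linear independence of `1, √n₁, √n₂, √n₃` over ℚ. -/
lemma aux_indep (n₁ n₂ n₃ g : ℕ) (hg : 0 < g) (h1 : 0 < n₁)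
    (hirr1 : Irrational (Real.sqrt n₁))
    (hirr2 : Irrational (Real.sqrt n₂))
    (hnm : ∀ p q : ℚ, Real.sqrt n₂ ≠ (p : ℝ) + (q : ℝ) * Real.sqrt n₁)
    (h12 : Real.sqrt n₁ * Real.sqrt n₂ = (g : ℝ) * Real.sqrt n₃)
    (a b c e : ℚ)
    (h : (a : ℝ) + (b : ℝ) * Real.sqrt n₁ + (c : ℝ) * Real.sqrt n₂
        + (e : ℝ) * Real.sqrt n₃ = 0) :
    a = 0 ∧ b = 0 ∧ c = 0 ∧ e = 0 := by
  have hs1 : Real.sqrt n₁ * Real.sqrt n₁ = (n₁ : ℝ) := Real.mul_self_sqrt (by positivity)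
  have hgQ : ((g : ℚ)) ≠ 0 := by exact_mod_cast hg.ne'
  set q' : ℚ := e / g with hq'
  have he : (q' : ℚ) * (g : ℚ) = e := by rw [hq']; field_simp
  have heR : ((q' : ℝ)) * (g : ℝ) = (e : ℝ) := by exact_mod_cast he
  have hkey : ((a : ℝ) + (b : ℝ) * Real.sqrt n₁)
      + ((c : ℝ) + (q' : ℝ) * Real.sqrt n₁) * Real.sqrt n₂ = 0 := by
    linear_combination h + (q' : ℝ) * h12 + Real.sqrt n₃ * heR
  rcases eq_or_ne ((c : ℝ) + (q' : ℝ) * Real.sqrt n₁) 0 with hC | hC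
  · -- c + q'√n₁ = 0  ⇒  c = q' = 0, then a = b = 0
    have hq'0 : q' = 0 := by
      by_contra hq0
      apply hirr1
      refine ⟨-c / q', ?_⟩
      have hq0R : ((q' : ℝ)) ≠ 0 := by exact_mod_cast hq0
      push_cast
      field_simp
      linarith [hC]
    have hc0 : c = 0 := by
      rw [hq'0] at hC
      push_cast at hC
      exact_mod_cast (by linarith [hC] : (c : ℝ) = 0)
    have he0 : e = 0 := by rw [← he, hq'0, zero_mul]
    have hab : (a : ℝ) + (b : ℝ) * Real.sqrt n₁ = 0 := by
      rw [hc0, hq'0] at hkey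
      push_cast at hkey
      linarith [hkey]
    have hb0 : b = 0 := by
      by_contra hb0
      apply hirr1
      refine ⟨-a / b, ?_⟩
      have hbR : ((b : ℝ)) ≠ 0 := by exact_mod_cast hb0
      push_cast
      field_simp
      linarith [hab]
    have ha0 : a = 0 := by
      rw [hb0] at hab
      push_cast at hab
      exact_mod_cast (by linarith [hab] : (a : ℝ) = 0)
    exact ⟨ha0, hb0, hc0, he0⟩
  · -- otherwise √n₂ ∈ ℚ(√n₁), contradiction
    exfalso
    set D : ℚ := c ^ 2 - q' ^ 2 * n₁ with hD
    have hD0 : D ≠ 0 := by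
      intro hD0
      rcases eq_or_ne q' 0 with hq0 | hq0
      · have h' : c ^ 2 - q' ^ 2 * (n₁ : ℚ) = 0 := by rw [← hD]; exact hD0
        rw [hq0] at h'
        have hc0 : c = 0 := by
          have h2 : c ^ 2 = 0 := by linear_combination h'
          exact pow_eq_zero_iff (two_ne_zero) |>.mp h2
        exact hC (by rw [hc0, hq0]; push_cast; ring)
      · apply aux_not_irrational_of_rat_sq (c / q') n₁ ?_ hirr1
        rw [hD] at hD0
        field_simp
        linear_combination hD0
    set p : ℚ := (-(a * c) + b * q' * n₁) / D with hp
    set q : ℚ := (-(b * c) + a * q') / D with hqq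
    have hP : p * c + q * q' * n₁ = -a := by
      rw [hp, hqq, hD]; rw [hD] at hD0; field_simp; ring
    have hQ : p * q' + q * c = -b := by
      rw [hp, hqq, hD]; rw [hD] at hD0; field_simp; ring
    have hPR : (p : ℝ) * c + (q : ℝ) * q' * n₁ = -(a : ℝ) := by exact_mod_cast hP
    have hQR : (p : ℝ) * q' + (q : ℝ) * c = -(b : ℝ) := by exact_mod_cast hQ
    have key2 : ((p : ℝ) + (q : ℝ) * Real.sqrt n₁) * ((c : ℝ) + (q' : ℝ) * Real.sqrt n₁)
        = Real.sqrt n₂ * ((c : ℝ) + (q' : ℝ) * Real.sqrt n₁) := by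
      have hL : ((p : ℝ) + (q : ℝ) * Real.sqrt n₁) * ((c : ℝ) + (q' : ℝ) * Real.sqrt n₁)
          = -((a : ℝ) + (b : ℝ) * Real.sqrt n₁) := by
        linear_combination (q : ℝ) * (q' : ℝ) * hs1 + hPR + Real.sqrt n₁ * hQR
      have hR : Real.sqrt n₂ * ((c : ℝ) + (q' : ℝ) * Real.sqrt n₁)
          = -((a : ℝ) + (b : ℝ) * Real.sqrt n₁) := by
        linear_combination hkey
      rw [hL, hR]
    exact hnm p q (mul_right_cancel₀ hC key2).symm

lemma aux_sqrt_mul (A B k C : ℕ) (h : A * B = k ^ 2 * C) :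
    Real.sqrt A * Real.sqrt B = (k : ℝ) * Real.sqrt C := by
  rw [← Real.sqrt_mul (by positivity) (B : ℝ)]
  rw [show ((A : ℝ) * (B : ℝ)) = ((k : ℝ)) ^ 2 * (C : ℝ) from by exact_mod_cast h]
  rw [Real.sqrt_mul (by positivity), Real.sqrt_sq (by positivity)]



/-- Suppose `α` is an algebraic integer of `F = ℚ(√n₁)` which is not a square in `F` but
becomes a square in the biquadratic field `K = ℚ(√n₁, √n₂)`. Then every odd rational
integer divisor of `gcd(n₂, n₃)` divides `α` in the ring of integers of `K`. -/
theorem stmt_6 (n₁ n₂ n₃ : ℕ) (h1 : 1 < n₁) (h2 : 1 < n₂) (hne : n₁ ≠ n₂)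
    (hsf1 : Squarefree n₁) (hsf2 : Squarefree n₂)
    (hn₃ : n₃ = n₁ * n₂ / (Nat.gcd n₁ n₂) ^ 2)
    (α : ℝ) (hαmem : ∃ a b : ℚ, α = (a : ℝ) + b * Real.sqrt n₁)
    (hαint : IsIntegral ℤ α)
    (hnotsq : ¬ ∃ a b : ℚ, ((a : ℝ) + b * Real.sqrt n₁) ^ 2 = α)
    (hsq : ∃ β : ℝ,
      (∃ x y z w : ℚ,
        β = (x : ℝ) + y * Real.sqrt n₁ + z * Real.sqrt n₂ + w * Real.sqrt n₃) ∧
      IsIntegral ℤ β ∧ β ^ 2 = α)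
    (d : ℤ) (hd : Odd d) (hdvd : d ∣ (Nat.gcd n₂ n₃ : ℤ)) :
    ∃ γ : ℝ,
      (∃ x y z w : ℚ,
        γ = (x : ℝ) + y * Real.sqrt n₁ + z * Real.sqrt n₂ + w * Real.sqrt n₃) ∧
      IsIntegral ℤ γ ∧ α = (d : ℝ) * γ := by
  obtain ⟨a, b, hα⟩ := hαmem
  obtain ⟨β, ⟨x, y, z, w, hβ⟩, hβint, hβα⟩ := hsq
  -- arithmetic set-up
  set g := Nat.gcd n₁ n₂ with hgdef
  have hg : 0 < g := Nat.gcd_pos_of_pos_left _ (by omega)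
  obtain ⟨m₁, hm₁⟩ : g ∣ n₁ := Nat.gcd_dvd_left n₁ n₂
  obtain ⟨m₂, hm₂⟩ : g ∣ n₂ := Nat.gcd_dvd_right n₁ n₂
  have hm₁pos : 0 < m₁ := by nlinarith [hm₁ ▸ (by omega : 0 < n₁)]
  have hm₂pos : 0 < m₂ := by nlinarith [hm₂ ▸ (by omega : 0 < n₂)]
  have hn₃eq : n₃ = m₁ * m₂ := by
    have hprod : n₁ * n₂ = (m₁ * m₂) * g ^ 2 := by rw [hm₁, hm₂]; ring
    rw [hn₃, hprod, Nat.mul_div_cancel _ (by positivity)]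
  have hcopm : Nat.Coprime m₁ m₂ := by
    have hc := Nat.coprime_div_gcd_div_gcd (m := n₁) (n := n₂) hg
    rwa [← hgdef, hm₁, hm₂, Nat.mul_div_cancel_left _ hg, Nat.mul_div_cancel_left _ hg] at hc
  have hsfm₁ : Squarefree m₁ := hsf1.squarefree_of_dvd ⟨g, by rw [hm₁]; ring⟩
  have hsfm₂ : Squarefree m₂ := hsf2.squarefree_of_dvd ⟨g, by rw [hm₂]; ring⟩
  have hsf3 : Squarefree n₃ := by
    rw [hn₃eq]; exact (Nat.squarefree_mul hcopm).mpr ⟨hsfm₁, hsfm₂⟩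
  have hn₃pos : 0 < n₃ := by rw [hn₃eq]; positivity
  have hn₃ne1 : n₃ ≠ 1 := by
    rw [hn₃eq]
    intro hmm
    have hma : m₁ = 1 := by nlinarith
    have hmb : m₂ = 1 := by nlinarith
    exact hne (by rw [hm₁, hm₂, hma, hmb])
  -- irrationality
  have hirr1 : Irrational (Real.sqrt n₁) :=
    irrational_sqrt_natCast_iff.mpr (aux_not_square n₁ (by omega) hsf1)
  have hirr2 : Irrational (Real.sqrt n₂) :=
    irrational_sqrt_natCast_iff.mpr (aux_not_square n₂ (by omega) hsf2)
  -- sqrt identities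
  have hs1 : Real.sqrt n₁ * Real.sqrt n₁ = (n₁ : ℝ) := Real.mul_self_sqrt (by positivity)
  have hs2 : Real.sqrt n₂ * Real.sqrt n₂ = (n₂ : ℝ) := Real.mul_self_sqrt (by positivity)
  have hs3 : Real.sqrt n₃ * Real.sqrt n₃ = (n₃ : ℝ) := Real.mul_self_sqrt (by positivity)
  have h12 : Real.sqrt n₁ * Real.sqrt n₂ = (g : ℝ) * Real.sqrt n₃ :=
    aux_sqrt_mul n₁ n₂ g n₃ (by rw [hm₁, hm₂, hn₃eq]; ring)
  have h13 : Real.sqrt n₁ * Real.sqrt n₃ = (m₁ : ℝ) * Real.sqrt n₂ :=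
    aux_sqrt_mul n₁ n₃ m₁ n₂ (by rw [hm₁, hm₂, hn₃eq]; ring)
  have h23 : Real.sqrt n₂ * Real.sqrt n₃ = (m₂ : ℝ) * Real.sqrt n₁ :=
    aux_sqrt_mul n₂ n₃ m₂ n₁ (by rw [hm₁, hm₂, hn₃eq]; ring)
  have hnm := aux_not_mem_F n₁ n₂ (by omega) hne hsf1 hsf2 hirr1 hirr2
  -- the fundamental linear relation
  rw [hβ] at hβα
  rw [hα] at hβα
  have Hlin : ((x ^ 2 + y ^ 2 * n₁ + z ^ 2 * n₂ + w ^ 2 * n₃ - a : ℚ) : ℝ)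
      + ((2 * x * y + 2 * z * w * m₂ - b : ℚ) : ℝ) * Real.sqrt n₁
      + ((2 * (x * z + y * w * m₁) : ℚ) : ℝ) * Real.sqrt n₂
      + ((2 * (x * w + y * z * g) : ℚ) : ℝ) * Real.sqrt n₃ = 0 := by
    push_cast
    linear_combination hβα - (y : ℝ) ^ 2 * hs1 - (z : ℝ) ^ 2 * hs2 - (w : ℝ) ^ 2 * hs3
      - 2 * (y : ℝ) * (z : ℝ) * h12 - 2 * (y : ℝ) * (w : ℝ) * h13
      - 2 * (z : ℝ) * (w : ℝ) * h23
  obtain ⟨hA0, hA1, hA2, hA3⟩ :=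
    aux_indep n₁ n₂ n₃ g hg (by omega) hirr1 hirr2 hnm h12 _ _ _ _ Hlin
  have hE1 : x * z + y * w * (m₁ : ℚ) = 0 := by
    have := hA2; field_simp at this; linarith [this]
  have hE2 : x * w + y * z * (g : ℚ) = 0 := by
    have := hA3; field_simp at this; linarith [this]
  -- x = y = 0
  have hxy : x = 0 ∧ y = 0 := by
    by_cases hzw : z = 0 ∧ w = 0
    · exfalso
      apply hnotsq
      refine ⟨x, y, ?_⟩
      rw [hα, ← hβα, hzw.1, hzw.2]
      push_cast
      ring
    · set Δ : ℚ := (g : ℚ) * z ^ 2 - (m₁ : ℚ) * w ^ 2 with hΔ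
      have hΔ0 : Δ ≠ 0 := by
        intro hΔ0
        have hw0 : w ≠ 0 := by
          rintro rfl
          have hz0 : z = 0 := by
            have : (g : ℚ) * z ^ 2 = 0 := by rw [hΔ] at hΔ0; linear_combination hΔ0
            have hgQ : ((g : ℚ)) ≠ 0 := by exact_mod_cast hg.ne'
            have := mul_eq_zero.mp this
            rcases this with h' | h'
            · exact absurd h' hgQ
            · exact pow_eq_zero_iff two_ne_zero |>.mp h'
          exact hzw ⟨hz0, rfl⟩
        apply aux_not_irrational_of_rat_sq ((g : ℚ) * z / w) n₁ ?_ hirr1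
        have hΔ' : (g : ℚ) * z ^ 2 = (m₁ : ℚ) * w ^ 2 := by
          rw [hΔ] at hΔ0; linear_combination hΔ0
        have hn₁Q : ((n₁ : ℚ)) = (g : ℚ) * (m₁ : ℚ) := by exact_mod_cast hm₁
        rw [div_pow, div_eq_iff (pow_ne_zero 2 hw0), hn₁Q]
        linear_combination (g : ℚ) * hΔ'
      constructor
      · have hx : Δ * x = 0 := by
          linear_combination ((g : ℚ) * z) * hE1 - ((m₁ : ℚ) * w) * hE2
        exact (mul_eq_zero.mp hx).resolve_left hΔ0
      · have hy : Δ * y = 0 := by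
          linear_combination (z : ℚ) * hE2 - (w : ℚ) * hE1
        exact (mul_eq_zero.mp hy).resolve_left hΔ0
  obtain ⟨hx0, hy0⟩ := hxy
  rw [hx0, hy0] at hA0 hA1
  have ha : a = z ^ 2 * (n₂ : ℚ) + w ^ 2 * (n₃ : ℚ) := by linear_combination -hA0
  have hb : b = 2 * z * w * (m₂ : ℚ) := by linear_combination -hA1
  -- integrality constraints on α
  rw [hα] at hαint
  obtain ⟨A, N, hA, hN⟩ := aux_quad_integral n₁ a b hirr1 hαint
  -- t := z²n₂ - w²n₃ is a rational integer T
  have he23Q : ((m₂ : ℚ)) ^ 2 * (n₁ : ℚ) = (n₂ : ℚ) * (n₃ : ℚ) := by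
    exact_mod_cast (by rw [hm₁, hm₂, hn₃eq]; ring : m₂ ^ 2 * n₁ = n₂ * n₃)
  have ht2 : (z ^ 2 * (n₂ : ℚ) - w ^ 2 * (n₃ : ℚ)) * (z ^ 2 * (n₂ : ℚ) - w ^ 2 * (n₃ : ℚ))
      = (N : ℚ) := by
    rw [hN, ha, hb]
    linear_combination (4 * z ^ 2 * w ^ 2 : ℚ) * he23Q
  obtain ⟨T, hT⟩ := aux_rat_int_of_sq_int _ N ht2
  -- 2z and 2w are integers
  have hM₁ : (2 * z) * (2 * z) * (n₂ : ℚ) = ((A + 2 * T : ℤ) : ℚ) := by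
    push_cast
    linear_combination -hA - 2 * hT - 2 * ha
  have hM₂ : (2 * w) * (2 * w) * (n₃ : ℚ) = ((A - 2 * T : ℤ) : ℚ) := by
    push_cast
    linear_combination -hA + 2 * hT - 2 * ha
  obtain ⟨u, hu⟩ := aux_int_of_sq_mul_squarefree (2 * z) n₂ (by omega) hsf2 _ hM₁
  obtain ⟨v, hv⟩ := aux_int_of_sq_mul_squarefree (2 * w) n₃ (by omega) hsf3 _ hM₂
  have hM₁int : A + 2 * T = u * u * (n₂ : ℤ) := by
    have : ((A + 2 * T : ℤ) : ℚ) = ((u * u * (n₂ : ℤ) : ℤ) : ℚ) := by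
      rw [← hM₁, ← hu]; push_cast; ring
    exact_mod_cast this
  have hM₂int : A - 2 * T = v * v * (n₃ : ℤ) := by
    have : ((A - 2 * T : ℤ) : ℚ) = ((v * v * (n₃ : ℤ) : ℤ) : ℚ) := by
      rw [← hM₂, ← hv]; push_cast; ring
    exact_mod_cast this
  -- divisibility
  have hdn₂ : d ∣ (n₂ : ℤ) := hdvd.trans (Int.natCast_dvd_natCast.mpr (Nat.gcd_dvd_left n₂ n₃))
  have hdn₃ : d ∣ (n₃ : ℤ) := hdvd.trans (Int.natCast_dvd_natCast.mpr (Nat.gcd_dvd_right n₂ n₃))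
  have hdM₁ : d ∣ A + 2 * T := by rw [hM₁int]; exact Dvd.dvd.mul_left hdn₂ _
  have hdM₂ : d ∣ A - 2 * T := by rw [hM₂int]; exact Dvd.dvd.mul_left hdn₃ _
  obtain ⟨k, hk⟩ := hd
  have hcop2 : IsCoprime d 2 := ⟨1, -k, by rw [hk]; ring⟩
  have hdA : d ∣ A := by
    have h2A : d ∣ 2 * A := by
      have : 2 * A = (A + 2 * T) + (A - 2 * T) := by ring
      rw [this]; exact dvd_add hdM₁ hdM₂
    exact hcop2.dvd_of_dvd_mul_left h2A
  have hdT : d ∣ T := by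
    have h4T : d ∣ 2 * (2 * T) := by
      have : 2 * (2 * T) = (A + 2 * T) - (A - 2 * T) := by ring
      rw [this]; exact dvd_sub hdM₁ hdM₂
    exact hcop2.dvd_of_dvd_mul_left (hcop2.dvd_of_dvd_mul_left h4T)
  obtain ⟨A₁, hA₁⟩ := hdA
  obtain ⟨T₁, hT₁⟩ := hdT
  -- assemble γ
  have hdne : d ≠ 0 := by rintro rfl; omega
  have hd0 : (d : ℝ) ≠ 0 := Int.cast_ne_zero.mpr hdne
  have hdQ0 : ((d : ℚ)) ≠ 0 := Int.cast_ne_zero.mpr hdne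
  refine ⟨α / d, ⟨a / (d : ℚ), b / (d : ℚ), 0, 0, ?_⟩, ?_, ?_⟩
  · push_cast
    rw [hα]
    field_simp
    ring
  · -- integrality of γ
    have hAR : ((A : ℝ)) = 2 * (a : ℝ) := by exact_mod_cast hA
    have hTR : ((T : ℝ)) ^ 2 = (a : ℝ) ^ 2 - (b : ℝ) ^ 2 * (n₁ : ℝ) := by
      have : ((T : ℚ)) ^ 2 = a ^ 2 - b ^ 2 * (n₁ : ℚ) := by
        rw [← hN, ← ht2, hT]; ring
      exact_mod_cast this
    have αeq : α ^ 2 - (A : ℝ) * α + ((T : ℝ)) ^ 2 = 0 := by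
      rw [hα]
      linear_combination hTR + (b : ℝ) ^ 2 * hs1 - ((a : ℝ) + (b : ℝ) * Real.sqrt n₁) * hAR
    apply aux_isIntegral_quadratic (α / d) (-A₁) (T₁ ^ 2)
    have hA₁R : ((A : ℝ)) = (d : ℝ) * ((A₁ : ℝ)) := by exact_mod_cast hA₁
    have hT₁R : ((T : ℝ)) = (d : ℝ) * ((T₁ : ℝ)) := by exact_mod_cast hT₁
    have key : α ^ 2 - (d : ℝ) * (A₁ : ℝ) * α + (d : ℝ) ^ 2 * ((T₁ : ℝ)) ^ 2 = 0 := by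
      linear_combination αeq + α * hA₁R - (((T : ℝ)) + (d : ℝ) * ((T₁ : ℝ))) * hT₁R
    have hrw : (α / (d : ℝ)) ^ 2 + -((A₁ : ℝ)) * (α / (d : ℝ)) + ((T₁ : ℝ)) ^ 2
        = (α ^ 2 - (d : ℝ) * (A₁ : ℝ) * α + (d : ℝ) ^ 2 * ((T₁ : ℝ)) ^ 2) / (d : ℝ) ^ 2 := by
      field_simp
      ring
    push_cast
    rw [hrw, key, zero_div]
  · field_simp
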